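/- Let p be a positive integer, let K : ℝ^p → ℝ be nonnegative, spherically symmetric, with ∫ (1 + ‖u‖₂⁸) K(u) du < ∞. Let m : ℝ^p → ℝ be five times continuously differentiable with bounded derivatives up to order five, and f : ℝ^p → ℝ be three times continuously differentiable with bounded derivatives up to order three. Fix x ∈ ℝ^p and define D_m³(x, u) = Σ_{i₁+⋯+i_p=3} (3!/(i₁!⋯i_p!)) (∂³m(x)/∂x₁^{i₁}⋯∂x_p^{i_p}) u₁^{i₁}⋯u_p^{i_p} and b(m) = ∫ u D_m³(x, u) K(u) du ∈ ℝ^p. Then, as h → 0⁺, the ℝ^p-valued integral ∫_{ℝ^p} u [ m(x + h u) − m(x) − h ∇m(x)ᵀ u ] K(u) f(x + h u) du equals h³ [ (1/2) ∫ u (uᵀ ∇²m(x) u)(∇f(x)ᵀ u) K(u) du + (1/6) f(x) b(m) ] + O(h⁵), componentwise. -/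

import Mathlib

open MeasureTheory

variable {E : Type*} [NormedAddCommGroup E] [NormedSpace ℝ E]


lemma smul_eval' (g : E → ℝ) (k : ℕ) (x : E) (c : ℝ) (u : E) :
    iteratedFDeriv ℝ k g x (fun _ => c • u) = c ^ k * iteratedFDeriv ℝ k g x (fun _ => u) := by
  have := (iteratedFDeriv ℝ k g x).map_smul_univ (fun _ => c) (fun _ => u)
  simpa [smul_eq_mul] using this

lemma deriv_eval' (g : E → ℝ) (j : ℕ) (hg : ContDiff ℝ (↑(j+1)) g) (x : E) (v : E) :
    iteratedFDeriv ℝ j (fun y => fderiv ℝ g y v) x (fun _ => v)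
      = iteratedFDeriv ℝ (j+1) g x (fun _ => v) := by
  have h1 : ContDiff ℝ (↑j) (fderiv ℝ g) := hg.fderiv_right (by exact_mod_cast le_rfl)
  have h2 : (fun y => fderiv ℝ g y v) = (ContinuousLinearMap.apply ℝ ℝ v) ∘ (fderiv ℝ g) := rfl
  rw [h2, ContinuousLinearMap.iteratedFDeriv_comp_left _ (h1.contDiffAt (x := x)) le_rfl,
    iteratedFDeriv_succ_apply_right]
  rfl

lemma norm_deriv_eval' (g : E → ℝ) (j : ℕ) (hg : ContDiff ℝ (↑(j+1)) g) (v : E) (y : E) :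
    ‖iteratedFDeriv ℝ j (fun z => fderiv ℝ g z v) y‖ ≤ ‖v‖ * ‖iteratedFDeriv ℝ (j+1) g y‖ := by
  have h1 : ContDiff ℝ (↑j) (fderiv ℝ g) := hg.fderiv_right (by exact_mod_cast le_rfl)
  have h2 : (fun z => fderiv ℝ g z v) = (ContinuousLinearMap.apply ℝ ℝ v) ∘ (fderiv ℝ g) := rfl
  rw [h2, ContinuousLinearMap.iteratedFDeriv_comp_left _ (h1.contDiffAt (x := y)) le_rfl]
  calc ‖(ContinuousLinearMap.apply ℝ ℝ v).compContinuousMultilinearMap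
        (iteratedFDeriv ℝ j (fderiv ℝ g) y)‖
      ≤ ‖ContinuousLinearMap.apply ℝ ℝ v‖ * ‖iteratedFDeriv ℝ j (fderiv ℝ g) y‖ :=
        ContinuousLinearMap.norm_compContinuousMultilinearMap_le _ _
    _ ≤ ‖v‖ * ‖iteratedFDeriv ℝ (j+1) g y‖ := by
        rw [norm_iteratedFDeriv_fderiv]
        exact mul_le_mul_of_nonneg_right
          (ContinuousLinearMap.opNorm_le_bound _ (norm_nonneg v)
            (fun φ => by rw [mul_comm]; exact φ.le_opNorm v)) (norm_nonneg _)

lemma my_taylor_bound : ∀ (n : ℕ) (g : E → ℝ) (M : ℝ), ContDiff ℝ (↑n) g →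
    (∀ y, ‖iteratedFDeriv ℝ n g y‖ ≤ M) → ∀ (x v : E),
    |g (x + v) - ∑ k ∈ Finset.range n,
        (k.factorial : ℝ)⁻¹ * iteratedFDeriv ℝ k g x (fun _ => v)|
      ≤ M * ‖v‖ ^ n := by
  intro n
  induction n with
  | zero =>
    intro g M hg hM x v
    simpa using (by simpa using hM (x + v) : |g (x+v)| ≤ M)
  | succ n IH =>
    intro g M hg hM x v
    have hM0 : 0 ≤ M := le_trans (norm_nonneg _) (hM 0)
    set G : E → ℝ := fun y => fderiv ℝ g y v with hGdef
    have hGc : ContDiff ℝ (↑n) G := by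
      exact (ContinuousLinearMap.apply ℝ ℝ v).contDiff.comp
        (hg.fderiv_right (by exact_mod_cast le_rfl))
    have hGb : ∀ y, ‖iteratedFDeriv ℝ n G y‖ ≤ ‖v‖ * M := fun y =>
      le_trans (norm_deriv_eval' g n hg v y)
        (mul_le_mul_of_nonneg_left (hM y) (norm_nonneg v))
    -- the function φ
    set φ : ℝ → ℝ := fun t => g (x + t • v) - ∑ k ∈ Finset.range (n+1),
        (k.factorial : ℝ)⁻¹ * t ^ k * iteratedFDeriv ℝ k g x (fun _ => v) with hφdef
    have hφ' : ∀ t : ℝ, HasDerivAt φ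
        (G (x + t • v) - ∑ k ∈ Finset.range n,
          (k.factorial : ℝ)⁻¹ * t ^ k * iteratedFDeriv ℝ (k+1) g x (fun _ => v)) t := by
      intro t
      have hline : HasDerivAt (fun t : ℝ => x + t • v) v t := by
        simpa using ((hasDerivAt_id t).smul_const v).const_add x
      have hgd : Differentiable ℝ g := hg.differentiable (by
        exact_mod_cast Nat.succ_ne_zero n)
      have h1 : HasDerivAt (fun t : ℝ => g (x + t • v)) (G (x + t • v)) t :=
        (hgd (x + t • v)).hasFDerivAt.comp_hasDerivAt t hline
      have h2 : HasDerivAt (fun t : ℝ => ∑ k ∈ Finset.range (n+1),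
          (k.factorial : ℝ)⁻¹ * t ^ k * iteratedFDeriv ℝ k g x (fun _ => v))
          (∑ k ∈ Finset.range (n+1), ((k.factorial : ℝ)⁻¹ * ((k : ℝ) * t ^ (k-1))) *
            iteratedFDeriv ℝ k g x (fun _ => v)) t := by
        refine HasDerivAt.fun_sum fun k _ => ?_
        exact ((hasDerivAt_pow k t).const_mul ((k.factorial : ℝ)⁻¹)).mul_const _
      have hsum : (∑ k ∈ Finset.range (n+1), ((k.factorial : ℝ)⁻¹ * ((k : ℝ) * t ^ (k-1))) *
            iteratedFDeriv ℝ k g x (fun _ => v))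
          = ∑ k ∈ Finset.range n,
            (k.factorial : ℝ)⁻¹ * t ^ k * iteratedFDeriv ℝ (k+1) g x (fun _ => v) := by
        rw [Finset.sum_range_succ']
        simp only [Nat.cast_zero, zero_mul, mul_zero, zero_mul, add_zero]
        refine Finset.sum_congr rfl fun k _ => ?_
        have hfac : ((k+1).factorial : ℝ) = ((k+1 : ℕ) : ℝ) * (k.factorial : ℝ) := by
          rw [Nat.factorial_succ]; push_cast; ring
        have hk1 : ((k+1 : ℕ) : ℝ) ≠ 0 := by positivity
        have hkf : (k.factorial : ℝ) ≠ 0 := by positivity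
        simp only [Nat.add_sub_cancel]
        rw [hfac]
        field_simp
      rw [← hsum]
      simpa [hφdef] using h1.fun_sub h2
    have hbound : ∀ t ∈ Set.Ico (0:ℝ) 1,
        ‖G (x + t • v) - ∑ k ∈ Finset.range n,
          (k.factorial : ℝ)⁻¹ * t ^ k * iteratedFDeriv ℝ (k+1) g x (fun _ => v)‖
          ≤ M * ‖v‖ ^ (n+1) := by
      intro t ht
      have ht0 : 0 ≤ t := ht.1
      have ht1 : t ≤ 1 := le_of_lt ht.2
      have heq : ∀ k ∈ Finset.range n, (k.factorial : ℝ)⁻¹ * t ^ k *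
            iteratedFDeriv ℝ (k+1) g x (fun _ => v)
          = (k.factorial : ℝ)⁻¹ * iteratedFDeriv ℝ k G x (fun _ => t • v) := by
        intro k hk
        have hgk : ContDiff ℝ (↑(k+1)) g := by
          refine hg.of_le ?_
          exact_mod_cast Nat.succ_le_succ (le_of_lt (Finset.mem_range.1 hk))
        rw [smul_eval' G k x t v, deriv_eval' g k hgk x v]
        ring
      rw [Finset.sum_congr rfl heq, Real.norm_eq_abs]
      have := IH G (‖v‖ * M) hGc hGb x (t • v)
      have h3 : |G (x + t • v) - ∑ k ∈ Finset.range n,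
          (k.factorial : ℝ)⁻¹ * iteratedFDeriv ℝ k G x (fun _ => t • v)|
          ≤ ‖v‖ * M * ‖t • v‖ ^ n := this
      refine le_trans h3 ?_
      have h4 : ‖t • v‖ ≤ ‖v‖ := by
        rw [norm_smul, Real.norm_eq_abs, abs_of_nonneg ht0]
        nlinarith [norm_nonneg v]
      calc ‖v‖ * M * ‖t • v‖ ^ n ≤ ‖v‖ * M * ‖v‖ ^ n := by
            gcongr
        _ = M * ‖v‖ ^ (n+1) := by ring
    have hmv := norm_image_sub_le_of_norm_deriv_le_segment'
      (f := φ) (f' := fun t => G (x + t • v) - ∑ k ∈ Finset.range n,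
        (k.factorial : ℝ)⁻¹ * t ^ k * iteratedFDeriv ℝ (k+1) g x (fun _ => v))
      (a := 0) (b := 1) (C := M * ‖v‖ ^ (n+1))
      (fun t _ => (hφ' t).hasDerivWithinAt) hbound 1 (by norm_num)
    have hφ0 : φ 0 = 0 := by
      have : ∑ k ∈ Finset.range (n+1),
          (k.factorial : ℝ)⁻¹ * (0:ℝ) ^ k * iteratedFDeriv ℝ k g x (fun _ => v) = g x := by
        rw [Finset.sum_range_succ']
        simp [iteratedFDeriv_zero_apply]
      simp [hφdef, this]
    have hφ1 : φ 1 = g (x + v) - ∑ k ∈ Finset.range (n+1),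
        (k.factorial : ℝ)⁻¹ * iteratedFDeriv ℝ k g x (fun _ => v) := by
      simp [hφdef]
    rw [hφ0, sub_zero, hφ1] at hmv
    simpa using hmv


lemma ml_smul {k : ℕ} (A : ContinuousMultilinearMap ℝ (fun _ : Fin k => E) ℝ) (c : ℝ) (u : E) :
    A (fun _ => c • u) = c ^ k * A (fun _ => u) := by
  simpa [smul_eq_mul] using A.map_smul_univ (fun _ => c) (fun _ => u)

lemma ml_neg {k : ℕ} (A : ContinuousMultilinearMap ℝ (fun _ : Fin k => E) ℝ) (u : E) :
    A (fun _ => -u) = (-1 : ℝ) ^ k * A (fun _ => u) := by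
  rw [show (fun _ : Fin k => -u) = fun _ : Fin k => (-1 : ℝ) • u from funext fun _ => by simp,
    ml_smul]

lemma ml_bound {k : ℕ} (A : ContinuousMultilinearMap ℝ (fun _ : Fin k => E) ℝ) (u : E) :
    |A (fun _ => u)| ≤ ‖A‖ * ‖u‖ ^ k := by
  have := A.le_opNorm (fun _ => u)
  simpa using this

lemma ml_cont {k : ℕ} (A : ContinuousMultilinearMap ℝ (fun _ : Fin k => E) ℝ) :
    Continuous (fun u : E => A (fun _ => u)) :=
  A.cont.comp (continuous_pi fun _ => continuous_id)

lemma abs_add₄ (a b c d : ℝ) : |a + b + c + d| ≤ |a| + |b| + |c| + |d| := by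
  calc |a + b + c + d| ≤ |a + b + c| + |d| := abs_add_le _ _
    _ ≤ (|a + b| + |c|) + |d| := by gcongr; exact abs_add_le _ _
    _ ≤ (|a| + |b| + |c|) + |d| := by gcongr; exact abs_add_le _ _

lemma pow_norm_le {p : ℕ} (u : Fin p → ℝ) {k : ℕ} (hk : k ≤ 8) :
    ‖u‖ ^ k ≤ 1 + (∑ i, u i ^ 2) ^ 4 := by
  have hs0 : 0 ≤ ∑ i, u i ^ 2 := Finset.sum_nonneg fun i _ => sq_nonneg _
  have hu : ‖u‖ ≤ Real.sqrt (∑ i, u i ^ 2) := by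
    rw [pi_norm_le_iff_of_nonneg (Real.sqrt_nonneg _)]
    intro i
    rw [Real.norm_eq_abs, ← Real.sqrt_sq_eq_abs]
    exact Real.sqrt_le_sqrt (Finset.single_le_sum (fun i _ => sq_nonneg (u i))
      (Finset.mem_univ i))
  have h1 : ‖u‖ ^ k ≤ Real.sqrt (∑ i, u i ^ 2) ^ k :=
    pow_le_pow_left₀ (norm_nonneg u) hu k
  refine h1.trans ?_
  rcases le_total (Real.sqrt (∑ i, u i ^ 2)) 1 with hle | hge
  · have h2 : Real.sqrt (∑ i, u i ^ 2) ^ k ≤ 1 := pow_le_one₀ (Real.sqrt_nonneg _) hle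
    nlinarith [pow_nonneg hs0 4]
  · have h2 : Real.sqrt (∑ i, u i ^ 2) ^ k ≤ Real.sqrt (∑ i, u i ^ 2) ^ 8 :=
      pow_le_pow_right₀ hge hk
    have h3 : Real.sqrt (∑ i, u i ^ 2) ^ 8 = (∑ i, u i ^ 2) ^ 4 := by
      rw [show (8:ℕ) = 2*4 from rfl, pow_mul, Real.sq_sqrt hs0]
    rw [h3] at h2
    linarith

set_option maxHeartbeats 1000000 in
/-- Leading bias term of the gradient components: as `h → 0⁺`,
componentwise,
`∫ u [m(x+hu) − m(x) − h ∇m(x)ᵀu] K(u) f(x+hu) du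
  = h³ [ (1/2) ∫ u (uᵀ∇²m(x)u)(∇f(x)ᵀu) K(u) du + (1/6) f(x) b(m) ] + O(h⁵)`,
where `D_m³(x,u)` is the third-order term of the Taylor expansion of `m`
(the third derivative of `m` at `x` evaluated at `(u,u,u)`) and
`b(m) = ∫ u D_m³(x,u) K(u) du`. -/
theorem stmt9 (p : ℕ) (hp : 0 < p)
    (K : (Fin p → ℝ) → ℝ) (hK_nonneg : ∀ u, 0 ≤ K u)
    (k : ℝ → ℝ) (hK_sym : ∀ u, K u = k (Real.sqrt (∑ i, u i ^ 2)))
    (hK_int : Integrable (fun u : Fin p → ℝ => (1 + (∑ i, u i ^ 2) ^ 4) * K u) volume)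
    (m : (Fin p → ℝ) → ℝ) (hm : ContDiff ℝ 5 m)
    (hm_bdd : ∀ i : ℕ, 1 ≤ i → i ≤ 5 → ∃ C, ∀ y, ‖iteratedFDeriv ℝ i m y‖ ≤ C)
    (f : (Fin p → ℝ) → ℝ) (hf : ContDiff ℝ 3 f)
    (hf_bdd : ∀ i : ℕ, 1 ≤ i → i ≤ 3 → ∃ C, ∀ y, ‖iteratedFDeriv ℝ i f y‖ ≤ C)
    (x : Fin p → ℝ) :
    ∃ C > 0, ∃ h₀ > 0, ∀ h : ℝ, 0 < h → h ≤ h₀ → ∀ j : Fin p,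
      |(∫ u : Fin p → ℝ,
          u j * (m (x + h • u) - m x - h * fderiv ℝ m x u) * K u * f (x + h • u)) -
          h ^ 3 *
            ((1 / 2) * (∫ u : Fin p → ℝ,
                u j * iteratedFDeriv ℝ 2 m x ![u, u] * fderiv ℝ f x u * K u) +
              (1 / 6) * f x *
                (∫ u : Fin p → ℝ, u j * iteratedFDeriv ℝ 3 m x ![u, u, u] * K u))|
        ≤ C * h ^ 5 := by
  classical
  obtain ⟨M₅, hM₅⟩ := hm_bdd 5 (by norm_num) (by norm_num)
  obtain ⟨M₂, hM₂⟩ := hm_bdd 2 (by norm_num) (by norm_num)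
  obtain ⟨F₃, hF₃⟩ := hf_bdd 3 (by norm_num) (by norm_num)
  obtain ⟨F₁, hF₁⟩ := hf_bdd 1 (by norm_num) (by norm_num)
  have hm5 : ContDiff ℝ ((5:ℕ) : ℕ∞) m := by exact_mod_cast hm
  have hf3 : ContDiff ℝ ((3:ℕ) : ℕ∞) f := by exact_mod_cast hf
  have hm2 : ContDiff ℝ ((2:ℕ) : ℕ∞) m := hm5.of_le (by exact_mod_cast (by norm_num : (2:ℕ) ≤ 5))
  have hf1 : ContDiff ℝ ((1:ℕ) : ℕ∞) f := hf3.of_le (by exact_mod_cast (by norm_num : (1:ℕ) ≤ 3))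
  have hM₅' : ∀ y, ‖iteratedFDeriv ℝ 5 m y‖ ≤ |M₅| := fun y => (hM₅ y).trans (le_abs_self _)
  have hM₂' : ∀ y, ‖iteratedFDeriv ℝ 2 m y‖ ≤ |M₂| := fun y => (hM₂ y).trans (le_abs_self _)
  have hF₃' : ∀ y, ‖iteratedFDeriv ℝ 3 f y‖ ≤ |F₃| := fun y => (hF₃ y).trans (le_abs_self _)
  have hF₁' : ∀ y, ‖iteratedFDeriv ℝ 1 f y‖ ≤ |F₁| := fun y => (hF₁ y).trans (le_abs_self _)
  have hs0 : ∀ u : Fin p → ℝ, (0:ℝ) < 1 + (∑ i, u i ^ 2) ^ 4 := fun u => by positivity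
  have hKm : AEStronglyMeasurable K (volume : Measure (Fin p → ℝ)) := by
    have hKeq : K = fun u => ((1 + (∑ i, u i ^ 2) ^ 4) * K u) * (1 + (∑ i, u i ^ 2) ^ 4)⁻¹ := by
      funext u
      field_simp
    rw [hKeq]
    refine hK_int.aestronglyMeasurable.mul (Continuous.aestronglyMeasurable ?_)
    refine Continuous.inv₀ ?_ (fun u => ne_of_gt (hs0 u))
    exact continuous_const.add ((continuous_finset_sum _ fun i _ => (continuous_apply i).pow 2).pow 4)
  have hIK0 : 0 ≤ ∫ u : Fin p → ℝ, (1 + (∑ i, u i ^ 2) ^ 4) * K u :=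
    integral_nonneg fun u => mul_nonneg (le_of_lt (hs0 u)) (hK_nonneg u)
  have integ : ∀ P : (Fin p → ℝ) → ℝ, Continuous P → ∀ C : ℝ,
      (∀ u, |P u| ≤ C * (1 + (∑ i, u i ^ 2) ^ 4)) →
      Integrable (fun u => P u * K u) volume := by
    intro P hP C hC
    refine Integrable.mono' (hK_int.const_mul C) (hP.aestronglyMeasurable.mul hKm)
      (ae_of_all _ fun u => ?_)
    rw [Real.norm_eq_abs, abs_mul, abs_of_nonneg (hK_nonneg u)]
    calc |P u| * K u ≤ (C * (1 + (∑ i, u i ^ 2) ^ 4)) * K u :=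
          mul_le_mul_of_nonneg_right (hC u) (hK_nonneg u)
      _ = C * ((1 + (∑ i, u i ^ 2) ^ 4) * K u) := by ring
  have hK_even : ∀ u : Fin p → ℝ, K (-u) = K u := by
    intro u
    rw [hK_sym, hK_sym]
    congr 2
    simp
  have odd_vanish : ∀ P : (Fin p → ℝ) → ℝ, (∀ u, P (-u) = - P u) →
      ∫ u, P u * K u = 0 := by
    intro P hP
    have h1 : ∫ u : Fin p → ℝ, P (-u) * K (-u) = ∫ u, P u * K u :=
      integral_neg_eq_self (fun u : Fin p → ℝ => P u * K u) volume
    have h2 : (fun u : Fin p → ℝ => P (-u) * K (-u)) = fun u => -(P u * K u) :=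
      funext fun u => by rw [hP, hK_even]; ring
    rw [h2, integral_neg] at h1
    linarith
  have hmat2 : ∀ u : Fin p → ℝ, iteratedFDeriv ℝ 2 m x ![u, u]
      = iteratedFDeriv ℝ 2 m x (fun _ => u) := by
    intro u
    congr 1
    funext i
    fin_cases i <;> rfl
  have hmat3 : ∀ u : Fin p → ℝ, iteratedFDeriv ℝ 3 m x ![u, u, u]
      = iteratedFDeriv ℝ 3 m x (fun _ => u) := by
    intro u
    congr 1
    funext i
    fin_cases i <;> rfl
  refine ⟨(‖iteratedFDeriv ℝ 3 m x‖ * ‖iteratedFDeriv ℝ 2 f x‖ / 12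
      + ‖iteratedFDeriv ℝ 4 m x‖ * ‖fderiv ℝ f x‖ / 24
      + ‖iteratedFDeriv ℝ 4 m x‖ * ‖iteratedFDeriv ℝ 2 f x‖ / 48
      + |F₃| * ‖iteratedFDeriv ℝ 2 m x‖ / 2
      + |F₃| * ‖iteratedFDeriv ℝ 3 m x‖ / 6
      + |F₃| * ‖iteratedFDeriv ℝ 4 m x‖ / 24
      + |M₅| * |f x| + |M₅| * |F₁|)
      * (∫ u : Fin p → ℝ, (1 + (∑ i, u i ^ 2) ^ 4) * K u) + 1,
    add_pos_of_nonneg_of_pos (mul_nonneg (by positivity) hIK0) one_pos, 1, one_pos, ?_⟩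
  intro h hh0 hh1 j
  have hnrm : ∀ (n : ℕ) (u : Fin p → ℝ), ‖h • u‖ ^ n = h ^ n * ‖u‖ ^ n := by
    intro n u
    rw [norm_smul, Real.norm_eq_abs, abs_of_pos hh0, mul_pow]
  have hTm : ∀ u : Fin p → ℝ, |m (x + h • u) - m x - h * fderiv ℝ m x u
      - (h^2/2 * iteratedFDeriv ℝ 2 m x (fun _ => u)
         + h^3/6 * iteratedFDeriv ℝ 3 m x (fun _ => u)
         + h^4/24 * iteratedFDeriv ℝ 4 m x (fun _ => u))|
      ≤ |M₅| * h^5 * ‖u‖^5 := by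
    intro u
    have H := my_taylor_bound 5 m |M₅| hm5 hM₅' x (h • u)
    have hs5 : ∑ kk ∈ Finset.range 5,
        ((kk.factorial : ℝ))⁻¹ * iteratedFDeriv ℝ kk m x (fun _ => h • u)
        = m x + h * fderiv ℝ m x u + (h^2/2 * iteratedFDeriv ℝ 2 m x (fun _ => u)
          + h^3/6 * iteratedFDeriv ℝ 3 m x (fun _ => u)
          + h^4/24 * iteratedFDeriv ℝ 4 m x (fun _ => u)) := by
      rw [Finset.sum_range_succ, Finset.sum_range_succ,
        Finset.sum_range_succ, Finset.sum_range_succ, Finset.sum_range_one,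
        ml_smul (iteratedFDeriv ℝ 1 m x) h u, ml_smul (iteratedFDeriv ℝ 2 m x) h u,
        ml_smul (iteratedFDeriv ℝ 3 m x) h u, ml_smul (iteratedFDeriv ℝ 4 m x) h u,
        iteratedFDeriv_zero_apply, iteratedFDeriv_one_apply]
      norm_num [Nat.factorial]
      ring
    rw [hs5, hnrm 5 u] at H
    have heq : m (x + h • u) - m x - h * fderiv ℝ m x u
        - (h^2/2 * iteratedFDeriv ℝ 2 m x (fun _ => u)
           + h^3/6 * iteratedFDeriv ℝ 3 m x (fun _ => u)
           + h^4/24 * iteratedFDeriv ℝ 4 m x (fun _ => u))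
        = m (x + h • u) - (m x + h * fderiv ℝ m x u
          + (h^2/2 * iteratedFDeriv ℝ 2 m x (fun _ => u)
             + h^3/6 * iteratedFDeriv ℝ 3 m x (fun _ => u)
             + h^4/24 * iteratedFDeriv ℝ 4 m x (fun _ => u))) := by ring
    rw [heq]
    calc _ ≤ |M₅| * (h^5 * ‖u‖^5) := H
      _ = |M₅| * h^5 * ‖u‖^5 := by ring
  have hTf : ∀ u : Fin p → ℝ, |f (x + h • u) - (f x + h * fderiv ℝ f x u
      + h^2/2 * iteratedFDeriv ℝ 2 f x (fun _ => u))| ≤ |F₃| * h^3 * ‖u‖^3 := by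
    intro u
    have H := my_taylor_bound 3 f |F₃| hf3 hF₃' x (h • u)
    have hs3 : ∑ kk ∈ Finset.range 3,
        ((kk.factorial : ℝ))⁻¹ * iteratedFDeriv ℝ kk f x (fun _ => h • u)
        = f x + h * fderiv ℝ f x u + h^2/2 * iteratedFDeriv ℝ 2 f x (fun _ => u) := by
      rw [Finset.sum_range_succ, Finset.sum_range_succ,
        Finset.sum_range_one,
        ml_smul (iteratedFDeriv ℝ 1 f x) h u, ml_smul (iteratedFDeriv ℝ 2 f x) h u,
        iteratedFDeriv_zero_apply, iteratedFDeriv_one_apply]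
      norm_num [Nat.factorial]
      ring
    rw [hs3, hnrm 3 u] at H
    calc _ ≤ |F₃| * (h^3 * ‖u‖^3) := H
      _ = |F₃| * h^3 * ‖u‖^3 := by ring
  have hTm2 : ∀ u : Fin p → ℝ, |m (x + h • u) - m x - h * fderiv ℝ m x u|
      ≤ |M₂| * h^2 * ‖u‖^2 := by
    intro u
    have H := my_taylor_bound 2 m |M₂| hm2 hM₂' x (h • u)
    have hs2 : ∑ kk ∈ Finset.range 2,
        ((kk.factorial : ℝ))⁻¹ * iteratedFDeriv ℝ kk m x (fun _ => h • u)
        = m x + h * fderiv ℝ m x u := by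
      rw [Finset.sum_range_succ, Finset.sum_range_one,
        ml_smul (iteratedFDeriv ℝ 1 m x) h u,
        iteratedFDeriv_zero_apply, iteratedFDeriv_one_apply]
      norm_num [Nat.factorial]
    rw [hs2, hnrm 2 u] at H
    have heq : m (x + h • u) - m x - h * fderiv ℝ m x u
        = m (x + h • u) - (m x + h * fderiv ℝ m x u) := by ring
    rw [heq]
    calc _ ≤ |M₂| * (h^2 * ‖u‖^2) := H
      _ = |M₂| * h^2 * ‖u‖^2 := by ring
  have hTf1 : ∀ u : Fin p → ℝ, |f (x + h • u)| ≤ |f x| + |F₁| * ‖u‖ := by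
    intro u
    have H := my_taylor_bound 1 f |F₁| hf1 hF₁' x (h • u)
    have hs1 : ∑ kk ∈ Finset.range 1,
        ((kk.factorial : ℝ))⁻¹ * iteratedFDeriv ℝ kk f x (fun _ => h • u) = f x := by
      rw [Finset.sum_range_one, iteratedFDeriv_zero_apply]
      norm_num
    rw [hs1, hnrm 1 u] at H
    have h1 : |f (x + h • u)| ≤ |f x| + |f (x + h • u) - f x| := by
      calc |f (x + h • u)| = |f x + (f (x + h • u) - f x)| := by ring_nf
        _ ≤ |f x| + |f (x + h • u) - f x| := abs_add_le _ _
    refine h1.trans ?_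
    have h2 : |f (x + h • u) - f x| ≤ |F₁| * ‖u‖ := by
      refine H.trans ?_
      have : h ^ 1 * ‖u‖ ^ 1 ≤ ‖u‖ := by
        simpa using mul_le_of_le_one_left (norm_nonneg u) hh1
      nlinarith [abs_nonneg F₁, norm_nonneg u]
    linarith
  have hν : ∀ (u : Fin p → ℝ) (kk : ℕ), kk ≤ 8 → ‖u‖ ^ kk ≤ 1 + (∑ i, u i ^ 2) ^ 4 :=
    fun u kk hkk => pow_norm_le u hkk
  have hh32 : h^3 ≤ h^2 := pow_le_pow_of_le_one hh0.le hh1 (by norm_num)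
  have hh42 : h^4 ≤ h^2 := pow_le_pow_of_le_one hh0.le hh1 (by norm_num)
  have hh65 : h^6 ≤ h^5 := pow_le_pow_of_le_one hh0.le hh1 (by norm_num)
  have hrem : ∀ u : Fin p → ℝ,
      |u j * (m (x + h • u) - m x - h * fderiv ℝ m x u) * f (x + h • u)
        - (h^2/2 * (u j * iteratedFDeriv ℝ 2 m x (fun _ => u) * f x)
           + h^3 * ((1/2) * (u j * iteratedFDeriv ℝ 2 m x (fun _ => u) * fderiv ℝ f x u)
                    + (1/6) * f x * (u j * iteratedFDeriv ℝ 3 m x (fun _ => u)))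
           + h^4 * (u j * ((1/4) * iteratedFDeriv ℝ 2 m x (fun _ => u)
                      * iteratedFDeriv ℝ 2 f x (fun _ => u)
                    + (1/6) * iteratedFDeriv ℝ 3 m x (fun _ => u) * fderiv ℝ f x u
                    + (1/24) * iteratedFDeriv ℝ 4 m x (fun _ => u) * f x)))|
      ≤ h^5 * ((‖iteratedFDeriv ℝ 3 m x‖ * ‖iteratedFDeriv ℝ 2 f x‖ / 12
          + ‖iteratedFDeriv ℝ 4 m x‖ * ‖fderiv ℝ f x‖ / 24
          + ‖iteratedFDeriv ℝ 4 m x‖ * ‖iteratedFDeriv ℝ 2 f x‖ / 48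
          + |F₃| * ‖iteratedFDeriv ℝ 2 m x‖ / 2
          + |F₃| * ‖iteratedFDeriv ℝ 3 m x‖ / 6
          + |F₃| * ‖iteratedFDeriv ℝ 4 m x‖ / 24
          + |M₅| * |f x| + |M₅| * |F₁|) * (1 + (∑ i, u i ^ 2) ^ 4)) := by
    intro u
    have hRA := hTm u
    have hRB := hTf u
    have hBb := hTf1 u
    have hν6 := hν u 6 (by norm_num)
    have hν7 := hν u 7 (by norm_num)
    have hν8 := hν u 8 (by norm_num)
    set A := m (x + h • u) - m x - h * fderiv ℝ m x u with hAd
    set B := f (x + h • u) with hBd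
    set a2 := iteratedFDeriv ℝ 2 m x (fun _ => u) with ha2d
    set a3 := iteratedFDeriv ℝ 3 m x (fun _ => u) with ha3d
    set a4 := iteratedFDeriv ℝ 4 m x (fun _ => u) with ha4d
    set b1 := fderiv ℝ f x u with hb1d
    set b2 := iteratedFDeriv ℝ 2 f x (fun _ => u) with hb2d
    have ha2b : |a2| ≤ ‖iteratedFDeriv ℝ 2 m x‖ * ‖u‖^2 := ha2d ▸ ml_bound _ u
    have ha3b : |a3| ≤ ‖iteratedFDeriv ℝ 3 m x‖ * ‖u‖^3 := ha3d ▸ ml_bound _ u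
    have ha4b : |a4| ≤ ‖iteratedFDeriv ℝ 4 m x‖ * ‖u‖^4 := ha4d ▸ ml_bound _ u
    have hb2b : |b2| ≤ ‖iteratedFDeriv ℝ 2 f x‖ * ‖u‖^2 := hb2d ▸ ml_bound _ u
    have hb1b : |b1| ≤ ‖fderiv ℝ f x‖ * ‖u‖ := by
      rw [hb1d, ← Real.norm_eq_abs]
      exact (fderiv ℝ f x).le_opNorm u
    have hkey : u j * A * B
        - (h^2/2 * (u j * a2 * f x)
           + h^3 * ((1/2) * (u j * a2 * b1) + (1/6) * f x * (u j * a3))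
           + h^4 * (u j * ((1/4) * a2 * b2 + (1/6) * a3 * b1 + (1/24) * a4 * f x)))
        = u j * (h^5 * ((1/12)*(a3*b2) + (1/24)*(a4*b1)) + h^6 * ((1/48)*(a4*b2))
            + (h^2/2*a2 + h^3/6*a3 + h^4/24*a4) * (B - (f x + h*b1 + h^2/2*b2))
            + (A - (h^2/2*a2 + h^3/6*a3 + h^4/24*a4)) * B) := by ring
    rw [hkey, abs_mul]
    have hj : |u j| ≤ ‖u‖ := by
      rw [← Real.norm_eq_abs]
      exact norm_le_pi_norm u j
    have e1 : |h^5 * ((1/12)*(a3*b2) + (1/24)*(a4*b1))|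
        ≤ h^5 * ((1/12)*((‖iteratedFDeriv ℝ 3 m x‖ * ‖u‖^3) * (‖iteratedFDeriv ℝ 2 f x‖ * ‖u‖^2))
            + (1/24)*((‖iteratedFDeriv ℝ 4 m x‖ * ‖u‖^4) * (‖fderiv ℝ f x‖ * ‖u‖))) := by
      rw [abs_mul, abs_of_pos (pow_pos hh0 5)]
      refine mul_le_mul_of_nonneg_left ?_ (pow_pos hh0 5).le
      calc |(1/12)*(a3*b2) + (1/24)*(a4*b1)|
          ≤ |(1/12)*(a3*b2)| + |(1/24)*(a4*b1)| := abs_add_le _ _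
        _ = (1/12)*(|a3| * |b2|) + (1/24)*(|a4| * |b1|) := by
            rw [abs_mul, abs_mul, abs_mul, abs_mul,
              show |(1:ℝ)/12| = 1/12 by norm_num, show |(1:ℝ)/24| = 1/24 by norm_num]
        _ ≤ (1/12)*((‖iteratedFDeriv ℝ 3 m x‖ * ‖u‖^3) * (‖iteratedFDeriv ℝ 2 f x‖ * ‖u‖^2))
            + (1/24)*((‖iteratedFDeriv ℝ 4 m x‖ * ‖u‖^4) * (‖fderiv ℝ f x‖ * ‖u‖)) := by
            gcongr
    have e2 : |h^6 * ((1/48)*(a4*b2))|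
        ≤ h^5 * ((1/48)*((‖iteratedFDeriv ℝ 4 m x‖ * ‖u‖^4)
            * (‖iteratedFDeriv ℝ 2 f x‖ * ‖u‖^2))) := by
      rw [abs_mul, abs_of_pos (pow_pos hh0 6)]
      refine mul_le_mul hh65 ?_ (abs_nonneg _) (pow_pos hh0 5).le
      calc |(1/48)*(a4*b2)| = (1/48)*(|a4| * |b2|) := by
            rw [abs_mul, abs_mul, show |(1:ℝ)/48| = 1/48 by norm_num]
        _ ≤ (1/48)*((‖iteratedFDeriv ℝ 4 m x‖ * ‖u‖^4) * (‖iteratedFDeriv ℝ 2 f x‖ * ‖u‖^2)) := by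
            gcongr
    have e3 : |(h^2/2*a2 + h^3/6*a3 + h^4/24*a4) * (B - (f x + h*b1 + h^2/2*b2))|
        ≤ h^5 * ((‖iteratedFDeriv ℝ 2 m x‖/2 * ‖u‖^2 + ‖iteratedFDeriv ℝ 3 m x‖/6 * ‖u‖^3
            + ‖iteratedFDeriv ℝ 4 m x‖/24 * ‖u‖^4) * (|F₃| * ‖u‖^3)) := by
      rw [abs_mul]
      have u1 : |h^2/2*a2| ≤ h^2 * (‖iteratedFDeriv ℝ 2 m x‖/2 * ‖u‖^2) := by
        calc |h^2/2*a2| = h^2/2 * |a2| := by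
              rw [abs_mul, abs_of_pos (by positivity : (0:ℝ) < h^2/2)]
          _ ≤ h^2/2 * (‖iteratedFDeriv ℝ 2 m x‖ * ‖u‖^2) := by gcongr
          _ = h^2 * (‖iteratedFDeriv ℝ 2 m x‖/2 * ‖u‖^2) := by ring
      have u2 : |h^3/6*a3| ≤ h^2 * (‖iteratedFDeriv ℝ 3 m x‖/6 * ‖u‖^3) := by
        calc |h^3/6*a3| = h^3/6 * |a3| := by
              rw [abs_mul, abs_of_pos (by positivity : (0:ℝ) < h^3/6)]
          _ ≤ h^2/6 * (‖iteratedFDeriv ℝ 3 m x‖ * ‖u‖^3) := by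
              refine mul_le_mul (by linarith) ha3b (abs_nonneg _) (by positivity)
          _ = h^2 * (‖iteratedFDeriv ℝ 3 m x‖/6 * ‖u‖^3) := by ring
      have u3 : |h^4/24*a4| ≤ h^2 * (‖iteratedFDeriv ℝ 4 m x‖/24 * ‖u‖^4) := by
        calc |h^4/24*a4| = h^4/24 * |a4| := by
              rw [abs_mul, abs_of_pos (by positivity : (0:ℝ) < h^4/24)]
          _ ≤ h^2/24 * (‖iteratedFDeriv ℝ 4 m x‖ * ‖u‖^4) := by
              refine mul_le_mul (by linarith) ha4b (abs_nonneg _) (by positivity)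
          _ = h^2 * (‖iteratedFDeriv ℝ 4 m x‖/24 * ‖u‖^4) := by ring
      have hPA : |h^2/2*a2 + h^3/6*a3 + h^4/24*a4|
          ≤ h^2 * (‖iteratedFDeriv ℝ 2 m x‖/2 * ‖u‖^2 + ‖iteratedFDeriv ℝ 3 m x‖/6 * ‖u‖^3
              + ‖iteratedFDeriv ℝ 4 m x‖/24 * ‖u‖^4) := by
        calc |h^2/2*a2 + h^3/6*a3 + h^4/24*a4|
            ≤ |h^2/2*a2 + h^3/6*a3| + |h^4/24*a4| := abs_add_le _ _
          _ ≤ (|h^2/2*a2| + |h^3/6*a3|) + |h^4/24*a4| := by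
              gcongr
              exact abs_add_le _ _
          _ ≤ _ := by
              rw [mul_add, mul_add]
              exact add_le_add (add_le_add u1 u2) u3
      have hRB' : |B - (f x + h*b1 + h^2/2*b2)| ≤ h^3 * (|F₃| * ‖u‖^3) := by
        calc |B - (f x + h*b1 + h^2/2*b2)| ≤ |F₃| * h^3 * ‖u‖^3 := hRB
          _ = h^3 * (|F₃| * ‖u‖^3) := by ring
      calc |h^2/2*a2 + h^3/6*a3 + h^4/24*a4| * |B - (f x + h*b1 + h^2/2*b2)|
          ≤ (h^2 * (‖iteratedFDeriv ℝ 2 m x‖/2 * ‖u‖^2 + ‖iteratedFDeriv ℝ 3 m x‖/6 * ‖u‖^3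
              + ‖iteratedFDeriv ℝ 4 m x‖/24 * ‖u‖^4)) * (h^3 * (|F₃| * ‖u‖^3)) :=
            mul_le_mul hPA hRB' (abs_nonneg _) (by positivity)
        _ = h^5 * ((‖iteratedFDeriv ℝ 2 m x‖/2 * ‖u‖^2 + ‖iteratedFDeriv ℝ 3 m x‖/6 * ‖u‖^3
            + ‖iteratedFDeriv ℝ 4 m x‖/24 * ‖u‖^4) * (|F₃| * ‖u‖^3)) := by ring
    have e4 : |(A - (h^2/2*a2 + h^3/6*a3 + h^4/24*a4)) * B|
        ≤ h^5 * ((|M₅| * ‖u‖^5) * (|f x| + |F₁| * ‖u‖)) := by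
      rw [abs_mul]
      have h1 : |A - (h^2/2*a2 + h^3/6*a3 + h^4/24*a4)| ≤ h^5 * (|M₅| * ‖u‖^5) := by
        calc |A - (h^2/2*a2 + h^3/6*a3 + h^4/24*a4)| ≤ |M₅| * h^5 * ‖u‖^5 := by
              refine le_trans (le_of_eq ?_) hRA
              rw [hAd]
          _ = h^5 * (|M₅| * ‖u‖^5) := by ring
      calc |A - (h^2/2*a2 + h^3/6*a3 + h^4/24*a4)| * |B|
          ≤ (h^5 * (|M₅| * ‖u‖^5)) * (|f x| + |F₁| * ‖u‖) :=
            mul_le_mul h1 hBb (abs_nonneg _) (by positivity)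
        _ = h^5 * ((|M₅| * ‖u‖^5) * (|f x| + |F₁| * ‖u‖)) := by ring
    have t0 := abs_add₄ (h^5 * ((1/12)*(a3*b2) + (1/24)*(a4*b1))) (h^6 * ((1/48)*(a4*b2)))
      ((h^2/2*a2 + h^3/6*a3 + h^4/24*a4) * (B - (f x + h*b1 + h^2/2*b2)))
      ((A - (h^2/2*a2 + h^3/6*a3 + h^4/24*a4)) * B)
    have hBIG : |h^5 * ((1/12)*(a3*b2) + (1/24)*(a4*b1)) + h^6 * ((1/48)*(a4*b2))
        + (h^2/2*a2 + h^3/6*a3 + h^4/24*a4) * (B - (f x + h*b1 + h^2/2*b2))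
        + (A - (h^2/2*a2 + h^3/6*a3 + h^4/24*a4)) * B|
        ≤ h^5 * (((1/12)*((‖iteratedFDeriv ℝ 3 m x‖ * ‖u‖^3) * (‖iteratedFDeriv ℝ 2 f x‖ * ‖u‖^2))
            + (1/24)*((‖iteratedFDeriv ℝ 4 m x‖ * ‖u‖^4) * (‖fderiv ℝ f x‖ * ‖u‖)))
          + ((1/48)*((‖iteratedFDeriv ℝ 4 m x‖ * ‖u‖^4) * (‖iteratedFDeriv ℝ 2 f x‖ * ‖u‖^2)))
          + ((‖iteratedFDeriv ℝ 2 m x‖/2 * ‖u‖^2 + ‖iteratedFDeriv ℝ 3 m x‖/6 * ‖u‖^3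
            + ‖iteratedFDeriv ℝ 4 m x‖/24 * ‖u‖^4) * (|F₃| * ‖u‖^3))
          + ((|M₅| * ‖u‖^5) * (|f x| + |F₁| * ‖u‖))) := by
      refine t0.trans ?_
      refine le_trans (add_le_add (add_le_add (add_le_add e1 e2) e3) e4) (le_of_eq ?_)
      ring
    calc |u j| * |h^5 * ((1/12)*(a3*b2) + (1/24)*(a4*b1)) + h^6 * ((1/48)*(a4*b2))
        + (h^2/2*a2 + h^3/6*a3 + h^4/24*a4) * (B - (f x + h*b1 + h^2/2*b2))
        + (A - (h^2/2*a2 + h^3/6*a3 + h^4/24*a4)) * B|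
        ≤ ‖u‖ * (h^5 * (((1/12)*((‖iteratedFDeriv ℝ 3 m x‖ * ‖u‖^3)
              * (‖iteratedFDeriv ℝ 2 f x‖ * ‖u‖^2))
            + (1/24)*((‖iteratedFDeriv ℝ 4 m x‖ * ‖u‖^4) * (‖fderiv ℝ f x‖ * ‖u‖)))
          + ((1/48)*((‖iteratedFDeriv ℝ 4 m x‖ * ‖u‖^4) * (‖iteratedFDeriv ℝ 2 f x‖ * ‖u‖^2)))
          + ((‖iteratedFDeriv ℝ 2 m x‖/2 * ‖u‖^2 + ‖iteratedFDeriv ℝ 3 m x‖/6 * ‖u‖^3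
            + ‖iteratedFDeriv ℝ 4 m x‖/24 * ‖u‖^4) * (|F₃| * ‖u‖^3))
          + ((|M₅| * ‖u‖^5) * (|f x| + |F₁| * ‖u‖)))) :=
          mul_le_mul hj hBIG (abs_nonneg _) (norm_nonneg u)
      _ = h^5 * (‖iteratedFDeriv ℝ 3 m x‖ * ‖iteratedFDeriv ℝ 2 f x‖ / 12 * ‖u‖^6
          + ‖iteratedFDeriv ℝ 4 m x‖ * ‖fderiv ℝ f x‖ / 24 * ‖u‖^6
          + ‖iteratedFDeriv ℝ 4 m x‖ * ‖iteratedFDeriv ℝ 2 f x‖ / 48 * ‖u‖^7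
          + |F₃| * ‖iteratedFDeriv ℝ 2 m x‖ / 2 * ‖u‖^6
          + |F₃| * ‖iteratedFDeriv ℝ 3 m x‖ / 6 * ‖u‖^7
          + |F₃| * ‖iteratedFDeriv ℝ 4 m x‖ / 24 * ‖u‖^8
          + |M₅| * |f x| * ‖u‖^6 + |M₅| * |F₁| * ‖u‖^7) := by ring
      _ ≤ h^5 * (‖iteratedFDeriv ℝ 3 m x‖ * ‖iteratedFDeriv ℝ 2 f x‖ / 12
            * (1 + (∑ i, u i ^ 2) ^ 4)
          + ‖iteratedFDeriv ℝ 4 m x‖ * ‖fderiv ℝ f x‖ / 24 * (1 + (∑ i, u i ^ 2) ^ 4)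
          + ‖iteratedFDeriv ℝ 4 m x‖ * ‖iteratedFDeriv ℝ 2 f x‖ / 48 * (1 + (∑ i, u i ^ 2) ^ 4)
          + |F₃| * ‖iteratedFDeriv ℝ 2 m x‖ / 2 * (1 + (∑ i, u i ^ 2) ^ 4)
          + |F₃| * ‖iteratedFDeriv ℝ 3 m x‖ / 6 * (1 + (∑ i, u i ^ 2) ^ 4)
          + |F₃| * ‖iteratedFDeriv ℝ 4 m x‖ / 24 * (1 + (∑ i, u i ^ 2) ^ 4)
          + |M₅| * |f x| * (1 + (∑ i, u i ^ 2) ^ 4)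
          + |M₅| * |F₁| * (1 + (∑ i, u i ^ 2) ^ 4)) := by
          gcongr <;> first
            | exact hν6
            | exact hν7
            | exact hν8
      _ = h^5 * ((‖iteratedFDeriv ℝ 3 m x‖ * ‖iteratedFDeriv ℝ 2 f x‖ / 12
          + ‖iteratedFDeriv ℝ 4 m x‖ * ‖fderiv ℝ f x‖ / 24
          + ‖iteratedFDeriv ℝ 4 m x‖ * ‖iteratedFDeriv ℝ 2 f x‖ / 48
          + |F₃| * ‖iteratedFDeriv ℝ 2 m x‖ / 2
          + |F₃| * ‖iteratedFDeriv ℝ 3 m x‖ / 6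
          + |F₃| * ‖iteratedFDeriv ℝ 4 m x‖ / 24
          + |M₅| * |f x| + |M₅| * |F₁|) * (1 + (∑ i, u i ^ 2) ^ 4)) := by ring
  -- notation shortcuts via haves
  have bndj : ∀ u : Fin p → ℝ, |u j| ≤ ‖u‖ := fun u => by
    rw [← Real.norm_eq_abs]
    exact norm_le_pi_norm u j
  have bndfd : ∀ u : Fin p → ℝ, |fderiv ℝ f x u| ≤ ‖fderiv ℝ f x‖ * ‖u‖ := fun u => by
    rw [← Real.norm_eq_abs]
    exact (fderiv ℝ f x).le_opNorm u
  have hline : Continuous (fun u : Fin p → ℝ => x + h • u) :=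
    continuous_const.add (continuous_id.const_smul h)
  have Int2 : Integrable (fun u : Fin p → ℝ =>
      (u j * iteratedFDeriv ℝ 2 m x (fun _ => u) * f x) * K u) volume := by
    refine integ _ (((continuous_apply j).mul (ml_cont _)).mul continuous_const)
      (‖iteratedFDeriv ℝ 2 m x‖ * |f x|) fun u => ?_
    have h1 := bndj u
    have h2 := ml_bound (iteratedFDeriv ℝ 2 m x) u
    have h3 := hν u 3 (by norm_num)
    calc |u j * iteratedFDeriv ℝ 2 m x (fun _ => u) * f x|
        = |u j| * |iteratedFDeriv ℝ 2 m x (fun _ => u)| * |f x| := by rw [abs_mul, abs_mul]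
      _ ≤ ‖u‖ * (‖iteratedFDeriv ℝ 2 m x‖ * ‖u‖^2) * |f x| :=
          mul_le_mul_of_nonneg_right
            (mul_le_mul h1 h2 (abs_nonneg _) (norm_nonneg _)) (abs_nonneg _)
      _ = ‖iteratedFDeriv ℝ 2 m x‖ * |f x| * ‖u‖^3 := by ring
      _ ≤ ‖iteratedFDeriv ℝ 2 m x‖ * |f x| * (1 + (∑ i, u i ^ 2)^4) :=
          mul_le_mul_of_nonneg_left h3 (by positivity)
  have Int3 : Integrable (fun u : Fin p → ℝ =>
      u j * iteratedFDeriv ℝ 2 m x (fun _ => u) * fderiv ℝ f x u * K u) volume := by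
    refine integ (fun u => u j * iteratedFDeriv ℝ 2 m x (fun _ => u) * fderiv ℝ f x u)
      (((continuous_apply j).mul (ml_cont _)).mul (fderiv ℝ f x).continuous)
      (‖iteratedFDeriv ℝ 2 m x‖ * ‖fderiv ℝ f x‖) fun u => ?_
    have h1 := bndj u
    have h2 := ml_bound (iteratedFDeriv ℝ 2 m x) u
    have h2' := bndfd u
    have h3 := hν u 4 (by norm_num)
    calc |u j * iteratedFDeriv ℝ 2 m x (fun _ => u) * fderiv ℝ f x u|
        = |u j| * |iteratedFDeriv ℝ 2 m x (fun _ => u)| * |fderiv ℝ f x u| := by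
          rw [abs_mul, abs_mul]
      _ ≤ ‖u‖ * (‖iteratedFDeriv ℝ 2 m x‖ * ‖u‖^2) * (‖fderiv ℝ f x‖ * ‖u‖) :=
          mul_le_mul (mul_le_mul h1 h2 (abs_nonneg _) (norm_nonneg _)) h2'
            (abs_nonneg _) (by positivity)
      _ = ‖iteratedFDeriv ℝ 2 m x‖ * ‖fderiv ℝ f x‖ * ‖u‖^4 := by ring
      _ ≤ ‖iteratedFDeriv ℝ 2 m x‖ * ‖fderiv ℝ f x‖ * (1 + (∑ i, u i ^ 2)^4) :=
          mul_le_mul_of_nonneg_left h3 (by positivity)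
  have Int3' : Integrable (fun u : Fin p → ℝ =>
      u j * iteratedFDeriv ℝ 3 m x (fun _ => u) * K u) volume := by
    refine integ (fun u => u j * iteratedFDeriv ℝ 3 m x (fun _ => u))
      ((continuous_apply j).mul (ml_cont _)) (‖iteratedFDeriv ℝ 3 m x‖) fun u => ?_
    have h1 := bndj u
    have h2 := ml_bound (iteratedFDeriv ℝ 3 m x) u
    have h3 := hν u 4 (by norm_num)
    calc |u j * iteratedFDeriv ℝ 3 m x (fun _ => u)|
        = |u j| * |iteratedFDeriv ℝ 3 m x (fun _ => u)| := by rw [abs_mul]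
      _ ≤ ‖u‖ * (‖iteratedFDeriv ℝ 3 m x‖ * ‖u‖^3) :=
          mul_le_mul h1 h2 (abs_nonneg _) (norm_nonneg _)
      _ = ‖iteratedFDeriv ℝ 3 m x‖ * ‖u‖^4 := by ring
      _ ≤ ‖iteratedFDeriv ℝ 3 m x‖ * (1 + (∑ i, u i ^ 2)^4) :=
          mul_le_mul_of_nonneg_left h3 (by positivity)
  have Int4 : Integrable (fun u : Fin p → ℝ =>
      (u j * ((1/4) * iteratedFDeriv ℝ 2 m x (fun _ => u) * iteratedFDeriv ℝ 2 f x (fun _ => u)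
        + (1/6) * iteratedFDeriv ℝ 3 m x (fun _ => u) * fderiv ℝ f x u
        + (1/24) * iteratedFDeriv ℝ 4 m x (fun _ => u) * f x)) * K u) volume := by
    refine integ _ ((continuous_apply j).mul
      ((((continuous_const.mul (ml_cont _)).mul (ml_cont _)).add
        ((continuous_const.mul (ml_cont _)).mul (fderiv ℝ f x).continuous)).add
        ((continuous_const.mul (ml_cont _)).mul continuous_const)))
      ((1/4) * (‖iteratedFDeriv ℝ 2 m x‖ * ‖iteratedFDeriv ℝ 2 f x‖)
        + (1/6) * (‖iteratedFDeriv ℝ 3 m x‖ * ‖fderiv ℝ f x‖)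
        + (1/24) * (‖iteratedFDeriv ℝ 4 m x‖ * |f x|)) fun u => ?_
    have h1 := bndj u
    have ha2 := ml_bound (iteratedFDeriv ℝ 2 m x) u
    have ha3 := ml_bound (iteratedFDeriv ℝ 3 m x) u
    have ha4 := ml_bound (iteratedFDeriv ℝ 4 m x) u
    have hb2 := ml_bound (iteratedFDeriv ℝ 2 f x) u
    have hb1 := bndfd u
    have h5 := hν u 5 (by norm_num)
    have hin : |(1/4) * iteratedFDeriv ℝ 2 m x (fun _ => u) * iteratedFDeriv ℝ 2 f x (fun _ => u)
        + (1/6) * iteratedFDeriv ℝ 3 m x (fun _ => u) * fderiv ℝ f x u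
        + (1/24) * iteratedFDeriv ℝ 4 m x (fun _ => u) * f x|
        ≤ ((1/4) * (‖iteratedFDeriv ℝ 2 m x‖ * ‖iteratedFDeriv ℝ 2 f x‖)
          + (1/6) * (‖iteratedFDeriv ℝ 3 m x‖ * ‖fderiv ℝ f x‖)
          + (1/24) * (‖iteratedFDeriv ℝ 4 m x‖ * |f x|)) * ‖u‖^4 := by
      calc |(1/4) * iteratedFDeriv ℝ 2 m x (fun _ => u) * iteratedFDeriv ℝ 2 f x (fun _ => u)
          + (1/6) * iteratedFDeriv ℝ 3 m x (fun _ => u) * fderiv ℝ f x u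
          + (1/24) * iteratedFDeriv ℝ 4 m x (fun _ => u) * f x|
          ≤ |(1/4) * iteratedFDeriv ℝ 2 m x (fun _ => u) * iteratedFDeriv ℝ 2 f x (fun _ => u)
            + (1/6) * iteratedFDeriv ℝ 3 m x (fun _ => u) * fderiv ℝ f x u|
            + |(1/24) * iteratedFDeriv ℝ 4 m x (fun _ => u) * f x| := abs_add_le _ _
        _ ≤ (|(1/4) * iteratedFDeriv ℝ 2 m x (fun _ => u) * iteratedFDeriv ℝ 2 f x (fun _ => u)|
            + |(1/6) * iteratedFDeriv ℝ 3 m x (fun _ => u) * fderiv ℝ f x u|)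
            + |(1/24) * iteratedFDeriv ℝ 4 m x (fun _ => u) * f x| := by
            gcongr
            exact abs_add_le _ _
        _ = (1/4) * (|iteratedFDeriv ℝ 2 m x (fun _ => u)| * |iteratedFDeriv ℝ 2 f x (fun _ => u)|)
            + (1/6) * (|iteratedFDeriv ℝ 3 m x (fun _ => u)| * |fderiv ℝ f x u|)
            + (1/24) * (|iteratedFDeriv ℝ 4 m x (fun _ => u)| * |f x|) := by
            rw [abs_mul, abs_mul, abs_mul, abs_mul, abs_mul, abs_mul,
              show |(1:ℝ)/4| = 1/4 by norm_num, show |(1:ℝ)/6| = 1/6 by norm_num,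
              show |(1:ℝ)/24| = 1/24 by norm_num]
            ring
        _ ≤ (1/4) * ((‖iteratedFDeriv ℝ 2 m x‖ * ‖u‖^2) * (‖iteratedFDeriv ℝ 2 f x‖ * ‖u‖^2))
            + (1/6) * ((‖iteratedFDeriv ℝ 3 m x‖ * ‖u‖^3) * (‖fderiv ℝ f x‖ * ‖u‖))
            + (1/24) * ((‖iteratedFDeriv ℝ 4 m x‖ * ‖u‖^4) * |f x|) := by
            gcongr
        _ = ((1/4) * (‖iteratedFDeriv ℝ 2 m x‖ * ‖iteratedFDeriv ℝ 2 f x‖)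
          + (1/6) * (‖iteratedFDeriv ℝ 3 m x‖ * ‖fderiv ℝ f x‖)
          + (1/24) * (‖iteratedFDeriv ℝ 4 m x‖ * |f x|)) * ‖u‖^4 := by ring
    calc |u j * ((1/4) * iteratedFDeriv ℝ 2 m x (fun _ => u) * iteratedFDeriv ℝ 2 f x (fun _ => u)
        + (1/6) * iteratedFDeriv ℝ 3 m x (fun _ => u) * fderiv ℝ f x u
        + (1/24) * iteratedFDeriv ℝ 4 m x (fun _ => u) * f x)|
        = |u j| * |(1/4) * iteratedFDeriv ℝ 2 m x (fun _ => u) * iteratedFDeriv ℝ 2 f x (fun _ => u)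
          + (1/6) * iteratedFDeriv ℝ 3 m x (fun _ => u) * fderiv ℝ f x u
          + (1/24) * iteratedFDeriv ℝ 4 m x (fun _ => u) * f x| := abs_mul _ _
      _ ≤ ‖u‖ * (((1/4) * (‖iteratedFDeriv ℝ 2 m x‖ * ‖iteratedFDeriv ℝ 2 f x‖)
          + (1/6) * (‖iteratedFDeriv ℝ 3 m x‖ * ‖fderiv ℝ f x‖)
          + (1/24) * (‖iteratedFDeriv ℝ 4 m x‖ * |f x|)) * ‖u‖^4) :=
          mul_le_mul h1 hin (abs_nonneg _) (norm_nonneg _)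
      _ = ((1/4) * (‖iteratedFDeriv ℝ 2 m x‖ * ‖iteratedFDeriv ℝ 2 f x‖)
          + (1/6) * (‖iteratedFDeriv ℝ 3 m x‖ * ‖fderiv ℝ f x‖)
          + (1/24) * (‖iteratedFDeriv ℝ 4 m x‖ * |f x|)) * ‖u‖^5 := by ring
      _ ≤ _ := mul_le_mul_of_nonneg_left h5 (by positivity)
  have IntPhi : Integrable (fun u : Fin p → ℝ =>
      (u j * (m (x + h • u) - m x - h * fderiv ℝ m x u) * f (x + h • u)) * K u) volume := by
    refine integ _ (((continuous_apply j).mul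
      (((hm.continuous.comp hline).sub continuous_const).sub
        (continuous_const.mul (fderiv ℝ m x).continuous))).mul (hf.continuous.comp hline))
      (|M₂| * |f x| + |M₂| * |F₁|) fun u => ?_
    have h1 := bndj u
    have h2 := hTm2 u
    have h3 := hTf1 u
    have hν3 := hν u 3 (by norm_num)
    have hν4 := hν u 4 (by norm_num)
    have hh2 : h^2 ≤ 1 := pow_le_one₀ hh0.le hh1
    have h2' : |m (x + h • u) - m x - h * fderiv ℝ m x u| ≤ |M₂| * ‖u‖^2 := by
      refine h2.trans ?_
      have : |M₂| * h^2 * ‖u‖^2 ≤ |M₂| * 1 * ‖u‖^2 := by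
        refine mul_le_mul_of_nonneg_right (mul_le_mul_of_nonneg_left hh2 (abs_nonneg _)) ?_
        positivity
      simpa using this
    calc |u j * (m (x + h • u) - m x - h * fderiv ℝ m x u) * f (x + h • u)|
        = |u j| * |m (x + h • u) - m x - h * fderiv ℝ m x u| * |f (x + h • u)| := by
          rw [abs_mul, abs_mul]
      _ ≤ ‖u‖ * (|M₂| * ‖u‖^2) * (|f x| + |F₁| * ‖u‖) :=
          mul_le_mul (mul_le_mul h1 h2' (abs_nonneg _) (norm_nonneg _)) h3 (abs_nonneg _)
            (by positivity)
      _ = |M₂| * |f x| * ‖u‖^3 + |M₂| * |F₁| * ‖u‖^4 := by ring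
      _ ≤ |M₂| * |f x| * (1 + (∑ i, u i ^ 2)^4) + |M₂| * |F₁| * (1 + (∑ i, u i ^ 2)^4) := by
          gcongr
      _ = (|M₂| * |f x| + |M₂| * |F₁|) * (1 + (∑ i, u i ^ 2)^4) := by ring
  have Ic1 : Integrable (fun u : Fin p → ℝ => h^2/2 * ((u j * iteratedFDeriv ℝ 2 m x (fun _ => u) * f x) * K u)) volume :=
    Int2.const_mul (h^2/2)
  have Ic2 : Integrable (fun u : Fin p → ℝ => (1/2) * (u j * iteratedFDeriv ℝ 2 m x (fun _ => u) * fderiv ℝ f x u * K u) + (1/6) * f x * (u j * iteratedFDeriv ℝ 3 m x (fun _ => u) * K u)) volume :=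
    (Int3.const_mul (1/2)).add (Int3'.const_mul ((1/6) * f x))
  have Ic3 : Integrable (fun u : Fin p → ℝ => h^3 * ((1/2) * (u j * iteratedFDeriv ℝ 2 m x (fun _ => u) * fderiv ℝ f x u * K u) + (1/6) * f x * (u j * iteratedFDeriv ℝ 3 m x (fun _ => u) * K u))) volume := Ic2.const_mul (h^3)
  have Ic4 : Integrable (fun u : Fin p → ℝ => h^4 * ((u j * ((1/4) * iteratedFDeriv ℝ 2 m x (fun _ => u) * iteratedFDeriv ℝ 2 f x (fun _ => u) + (1/6) * iteratedFDeriv ℝ 3 m x (fun _ => u) * fderiv ℝ f x u + (1/24) * iteratedFDeriv ℝ 4 m x (fun _ => u) * f x)) * K u)) volume := Int4.const_mul (h^4)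
  have Icomb : Integrable (fun u : Fin p → ℝ => h^2/2 * ((u j * iteratedFDeriv ℝ 2 m x (fun _ => u) * f x) * K u) + h^3 * ((1/2) * (u j * iteratedFDeriv ℝ 2 m x (fun _ => u) * fderiv ℝ f x u * K u) + (1/6) * f x * (u j * iteratedFDeriv ℝ 3 m x (fun _ => u) * K u)) + h^4 * ((u j * ((1/4) * iteratedFDeriv ℝ 2 m x (fun _ => u) * iteratedFDeriv ℝ 2 f x (fun _ => u) + (1/6) * iteratedFDeriv ℝ 3 m x (fun _ => u) * fderiv ℝ f x u + (1/24) * iteratedFDeriv ℝ 4 m x (fun _ => u) * f x)) * K u)) volume := (Ic1.add Ic3).add Ic4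
  have IntRem : Integrable (fun u : Fin p → ℝ => (u j * (m (x + h • u) - m x - h * fderiv ℝ m x u) * f (x + h • u)) * K u - (h^2/2 * ((u j * iteratedFDeriv ℝ 2 m x (fun _ => u) * f x) * K u) + h^3 * ((1/2) * (u j * iteratedFDeriv ℝ 2 m x (fun _ => u) * fderiv ℝ f x u * K u) + (1/6) * f x * (u j * iteratedFDeriv ℝ 3 m x (fun _ => u) * K u)) + h^4 * ((u j * ((1/4) * iteratedFDeriv ℝ 2 m x (fun _ => u) * iteratedFDeriv ℝ 2 f x (fun _ => u) + (1/6) * iteratedFDeriv ℝ 3 m x (fun _ => u) * fderiv ℝ f x u + (1/24) * iteratedFDeriv ℝ 4 m x (fun _ => u) * f x)) * K u))) volume :=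
    IntPhi.sub Icomb
  -- vanishing of even-degree terms
  have hv2 : ∫ u : Fin p → ℝ, (u j * iteratedFDeriv ℝ 2 m x (fun _ => u) * f x) * K u = 0 := by
    refine odd_vanish _ fun u => ?_
    have h1 : iteratedFDeriv ℝ 2 m x (fun _ => -u) = iteratedFDeriv ℝ 2 m x (fun _ => u) := by
      rw [ml_neg]
      norm_num
    simp only [Pi.neg_apply, h1]
    ring
  have hv4 : ∫ u : Fin p → ℝ,
      (u j * ((1/4) * iteratedFDeriv ℝ 2 m x (fun _ => u) * iteratedFDeriv ℝ 2 f x (fun _ => u)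
        + (1/6) * iteratedFDeriv ℝ 3 m x (fun _ => u) * fderiv ℝ f x u
        + (1/24) * iteratedFDeriv ℝ 4 m x (fun _ => u) * f x)) * K u = 0 := by
    refine odd_vanish _ fun u => ?_
    have h2 : iteratedFDeriv ℝ 2 m x (fun _ => -u) = iteratedFDeriv ℝ 2 m x (fun _ => u) := by
      rw [ml_neg]; norm_num
    have h3 : iteratedFDeriv ℝ 3 m x (fun _ => -u) = -iteratedFDeriv ℝ 3 m x (fun _ => u) := by
      rw [ml_neg]; norm_num
    have h4 : iteratedFDeriv ℝ 4 m x (fun _ => -u) = iteratedFDeriv ℝ 4 m x (fun _ => u) := by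
      rw [ml_neg]; norm_num
    have hb2 : iteratedFDeriv ℝ 2 f x (fun _ => -u) = iteratedFDeriv ℝ 2 f x (fun _ => u) := by
      rw [ml_neg]; norm_num
    have hb1 : fderiv ℝ f x (-u) = -fderiv ℝ f x u := map_neg _ u
    simp only [Pi.neg_apply, h2, h3, h4, hb2, hb1]
    ring
  -- splitting the main integral
  have hsplit : (∫ u : Fin p → ℝ,
      (u j * (m (x + h • u) - m x - h * fderiv ℝ m x u) * f (x + h • u)) * K u)
      = (h^2/2 * (∫ u : Fin p → ℝ, (u j * iteratedFDeriv ℝ 2 m x (fun _ => u) * f x) * K u)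
        + h^3 * ((1/2) * (∫ u : Fin p → ℝ,
              u j * iteratedFDeriv ℝ 2 m x (fun _ => u) * fderiv ℝ f x u * K u)
            + (1/6) * f x * (∫ u : Fin p → ℝ, u j * iteratedFDeriv ℝ 3 m x (fun _ => u) * K u))
        + h^4 * (∫ u : Fin p → ℝ,
            (u j * ((1/4) * iteratedFDeriv ℝ 2 m x (fun _ => u)
                * iteratedFDeriv ℝ 2 f x (fun _ => u)
              + (1/6) * iteratedFDeriv ℝ 3 m x (fun _ => u) * fderiv ℝ f x u
              + (1/24) * iteratedFDeriv ℝ 4 m x (fun _ => u) * f x)) * K u))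
        + ∫ u : Fin p → ℝ,
            ((u j * (m (x + h • u) - m x - h * fderiv ℝ m x u) * f (x + h • u)) * K u
             - (h^2/2 * ((u j * iteratedFDeriv ℝ 2 m x (fun _ => u) * f x) * K u)
                + h^3 * ((1/2) * (u j * iteratedFDeriv ℝ 2 m x (fun _ => u)
                      * fderiv ℝ f x u * K u)
                    + (1/6) * f x * (u j * iteratedFDeriv ℝ 3 m x (fun _ => u) * K u))
                + h^4 * ((u j * ((1/4) * iteratedFDeriv ℝ 2 m x (fun _ => u)
                      * iteratedFDeriv ℝ 2 f x (fun _ => u)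
                    + (1/6) * iteratedFDeriv ℝ 3 m x (fun _ => u) * fderiv ℝ f x u
                    + (1/24) * iteratedFDeriv ℝ 4 m x (fun _ => u) * f x)) * K u))) := by
    have stepA : (∫ u : Fin p → ℝ,
        (u j * (m (x + h • u) - m x - h * fderiv ℝ m x u) * f (x + h • u)) * K u)
        = (∫ u : Fin p → ℝ,
            (h^2/2 * ((u j * iteratedFDeriv ℝ 2 m x (fun _ => u) * f x) * K u)
            + h^3 * ((1/2) * (u j * iteratedFDeriv ℝ 2 m x (fun _ => u) * fderiv ℝ f x u * K u)
                + (1/6) * f x * (u j * iteratedFDeriv ℝ 3 m x (fun _ => u) * K u))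
            + h^4 * ((u j * ((1/4) * iteratedFDeriv ℝ 2 m x (fun _ => u)
                  * iteratedFDeriv ℝ 2 f x (fun _ => u)
                + (1/6) * iteratedFDeriv ℝ 3 m x (fun _ => u) * fderiv ℝ f x u
                + (1/24) * iteratedFDeriv ℝ 4 m x (fun _ => u) * f x)) * K u)))
          + ∫ u : Fin p → ℝ,
            ((u j * (m (x + h • u) - m x - h * fderiv ℝ m x u) * f (x + h • u)) * K u
             - (h^2/2 * ((u j * iteratedFDeriv ℝ 2 m x (fun _ => u) * f x) * K u)
                + h^3 * ((1/2) * (u j * iteratedFDeriv ℝ 2 m x (fun _ => u)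
                      * fderiv ℝ f x u * K u)
                    + (1/6) * f x * (u j * iteratedFDeriv ℝ 3 m x (fun _ => u) * K u))
                + h^4 * ((u j * ((1/4) * iteratedFDeriv ℝ 2 m x (fun _ => u)
                      * iteratedFDeriv ℝ 2 f x (fun _ => u)
                    + (1/6) * iteratedFDeriv ℝ 3 m x (fun _ => u) * fderiv ℝ f x u
                    + (1/24) * iteratedFDeriv ℝ 4 m x (fun _ => u) * f x)) * K u))) := by
      rw [← integral_add Icomb IntRem]
      congr 1
      funext u
      ring
    have q1 : (∫ u : Fin p → ℝ, h^2/2 * ((u j * iteratedFDeriv ℝ 2 m x (fun _ => u) * f x) * K u) + h^3 * ((1/2) * (u j * iteratedFDeriv ℝ 2 m x (fun _ => u) * fderiv ℝ f x u * K u) + (1/6) * f x * (u j * iteratedFDeriv ℝ 3 m x (fun _ => u) * K u)) + h^4 * ((u j * ((1/4) * iteratedFDeriv ℝ 2 m x (fun _ => u) * iteratedFDeriv ℝ 2 f x (fun _ => u) + (1/6) * iteratedFDeriv ℝ 3 m x (fun _ => u) * fderiv ℝ f x u + (1/24) * iteratedFDeriv ℝ 4 m x (fun _ => u) * f x)) *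 K u))
        = (∫ u : Fin p → ℝ, h^2/2 * ((u j * iteratedFDeriv ℝ 2 m x (fun _ => u) * f x) * K u) + h^3 * ((1/2) * (u j * iteratedFDeriv ℝ 2 m x (fun _ => u) * fderiv ℝ f x u * K u) + (1/6) * f x * (u j * iteratedFDeriv ℝ 3 m x (fun _ => u) * K u)))
          + ∫ u : Fin p → ℝ, h^4 * ((u j * ((1/4) * iteratedFDeriv ℝ 2 m x (fun _ => u) * iteratedFDeriv ℝ 2 f x (fun _ => u) + (1/6) * iteratedFDeriv ℝ 3 m x (fun _ => u) * fderiv ℝ f x u + (1/24) * iteratedFDeriv ℝ 4 m x (fun _ => u) * f x)) * K u) := integral_add (Ic1.add Ic3) Ic4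
    have q2 : (∫ u : Fin p → ℝ, h^2/2 * ((u j * iteratedFDeriv ℝ 2 m x (fun _ => u) * f x) * K u) + h^3 * ((1/2) * (u j * iteratedFDeriv ℝ 2 m x (fun _ => u) * fderiv ℝ f x u * K u) + (1/6) * f x * (u j * iteratedFDeriv ℝ 3 m x (fun _ => u) * K u)))
        = (∫ u : Fin p → ℝ, h^2/2 * ((u j * iteratedFDeriv ℝ 2 m x (fun _ => u) * f x) * K u)) + ∫ u : Fin p → ℝ, h^3 * ((1/2) * (u j * iteratedFDeriv ℝ 2 m x (fun _ => u) * fderiv ℝ f x u * K u) + (1/6) * f x * (u j * iteratedFDeriv ℝ 3 m x (fun _ => u) * K u)) :=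
      integral_add Ic1 Ic3
    have q3 : (∫ u : Fin p → ℝ, h^2/2 * ((u j * iteratedFDeriv ℝ 2 m x (fun _ => u) * f x) * K u)) = h^2/2 * ∫ u : Fin p → ℝ, (u j * iteratedFDeriv ℝ 2 m x (fun _ => u) * f x) * K u :=
      integral_const_mul _ _
    have q4 : (∫ u : Fin p → ℝ, h^3 * ((1/2) * (u j * iteratedFDeriv ℝ 2 m x (fun _ => u) * fderiv ℝ f x u * K u) + (1/6) * f x * (u j * iteratedFDeriv ℝ 3 m x (fun _ => u) * K u))) = h^3 * ∫ u : Fin p → ℝ, (1/2) * (u j * iteratedFDeriv ℝ 2 m x (fun _ => u) * fderiv ℝ f x u * K u) + (1/6) * f x * (u j * iteratedFDeriv ℝ 3 m x (fun _ => u) * K u) :=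
      integral_const_mul _ _
    have q5 : (∫ u : Fin p → ℝ, h^4 * ((u j * ((1/4) * iteratedFDeriv ℝ 2 m x (fun _ => u) * iteratedFDeriv ℝ 2 f x (fun _ => u) + (1/6) * iteratedFDeriv ℝ 3 m x (fun _ => u) * fderiv ℝ f x u + (1/24) * iteratedFDeriv ℝ 4 m x (fun _ => u) * f x)) * K u)) = h^4 * ∫ u : Fin p → ℝ, (u j * ((1/4) * iteratedFDeriv ℝ 2 m x (fun _ => u) * iteratedFDeriv ℝ 2 f x (fun _ => u) + (1/6) * iteratedFDeriv ℝ 3 m x (fun _ => u) * fderiv ℝ f x u + (1/24) * iteratedFDeriv ℝ 4 m x (fun _ => u) * f x)) * K u :=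
      integral_const_mul _ _
    have q6 : (∫ u : Fin p → ℝ, (1/2) * (u j * iteratedFDeriv ℝ 2 m x (fun _ => u) * fderiv ℝ f x u * K u) + (1/6) * f x * (u j * iteratedFDeriv ℝ 3 m x (fun _ => u) * K u))
        = (∫ u : Fin p → ℝ, (1/2) * (u j * iteratedFDeriv ℝ 2 m x (fun _ => u) * fderiv ℝ f x u * K u)) + ∫ u : Fin p → ℝ, (1/6) * f x * (u j * iteratedFDeriv ℝ 3 m x (fun _ => u) * K u) :=
      integral_add (Int3.const_mul (1/2)) (Int3'.const_mul ((1/6) * f x))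
    have q7 : (∫ u : Fin p → ℝ, (1/2) * (u j * iteratedFDeriv ℝ 2 m x (fun _ => u) * fderiv ℝ f x u * K u)) = (1/2) * ∫ u : Fin p → ℝ, u j * iteratedFDeriv ℝ 2 m x (fun _ => u) * fderiv ℝ f x u * K u :=
      integral_const_mul _ _
    have q8 : (∫ u : Fin p → ℝ, (1/6) * f x * (u j * iteratedFDeriv ℝ 3 m x (fun _ => u) * K u))
        = (1/6) * f x * ∫ u : Fin p → ℝ, u j * iteratedFDeriv ℝ 3 m x (fun _ => u) * K u := integral_const_mul _ _
    rw [stepA, q1, q2, q3, q4, q5, q6, q7, q8]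
  simp only [hmat2, hmat3]
  have hI0 : (∫ u : Fin p → ℝ,
      u j * (m (x + h • u) - m x - h * fderiv ℝ m x u) * K u * f (x + h • u))
      = ∫ u : Fin p → ℝ, (u j * (m (x + h • u) - m x - h * fderiv ℝ m x u) * f (x + h • u)) * K u := by
    congr 1
    funext u
    ring
  rw [hI0, hsplit, hv2, hv4]
  rw [mul_zero, mul_zero, zero_add, add_zero, add_sub_cancel_left]
  have hR : |∫ u : Fin p → ℝ, ((u j * (m (x + h • u) - m x - h * fderiv ℝ m x u) * f (x + h • u)) * K u - (h^2/2 * ((u j * iteratedFDeriv ℝ 2 m x (fun _ => u) * f x) * K u) + h^3 * ((1/2) * (u j * iteratedFDeriv ℝ 2 m x (fun _ => u) * fderiv ℝ f x u * K u) + (1/6) * f x * (u j * iteratedFDeriv ℝ 3 m x (fun _ => u) * K u)) + h^4 * ((u j * ((1/4) * iteratedFDeriv ℝ 2 m x (fun _ => u) * iteratedFDeriv ℝ 2 f x (fun _ => u) + (1/6) * iteratedFDeriv ℝ 3 m x (fun _ => u) * fderiv ℝ f x u + (1/24) * iteratedFDeriv ℝ 4 m x (fun _ => u) * f x)) * K 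u)))|
      ≤ (h^5 * (‖iteratedFDeriv ℝ 3 m x‖ * ‖iteratedFDeriv ℝ 2 f x‖ / 12
      + ‖iteratedFDeriv ℝ 4 m x‖ * ‖fderiv ℝ f x‖ / 24
      + ‖iteratedFDeriv ℝ 4 m x‖ * ‖iteratedFDeriv ℝ 2 f x‖ / 48
      + |F₃| * ‖iteratedFDeriv ℝ 2 m x‖ / 2
      + |F₃| * ‖iteratedFDeriv ℝ 3 m x‖ / 6
      + |F₃| * ‖iteratedFDeriv ℝ 4 m x‖ / 24
      + |M₅| * |f x| + |M₅| * |F₁|)) * ∫ u : Fin p → ℝ, (1 + (∑ i, u i ^ 2) ^ 4) * K u := by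
    rw [← Real.norm_eq_abs]
    refine (norm_integral_le_of_norm_le (hK_int.const_mul (h^5 * (‖iteratedFDeriv ℝ 3 m x‖ * ‖iteratedFDeriv ℝ 2 f x‖ / 12
      + ‖iteratedFDeriv ℝ 4 m x‖ * ‖fderiv ℝ f x‖ / 24
      + ‖iteratedFDeriv ℝ 4 m x‖ * ‖iteratedFDeriv ℝ 2 f x‖ / 48
      + |F₃| * ‖iteratedFDeriv ℝ 2 m x‖ / 2
      + |F₃| * ‖iteratedFDeriv ℝ 3 m x‖ / 6
      + |F₃| * ‖iteratedFDeriv ℝ 4 m x‖ / 24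
      + |M₅| * |f x| + |M₅| * |F₁|)))
      (ae_of_all _ fun u => ?_)).trans (le_of_eq (integral_const_mul _ _))
    have e : (u j * (m (x + h • u) - m x - h * fderiv ℝ m x u) * f (x + h • u)) * K u - (h^2/2 * ((u j * iteratedFDeriv ℝ 2 m x (fun _ => u) * f x) * K u) + h^3 * ((1/2) * (u j * iteratedFDeriv ℝ 2 m x (fun _ => u) * fderiv ℝ f x u * K u) + (1/6) * f x * (u j * iteratedFDeriv ℝ 3 m x (fun _ => u) * K u)) + h^4 * ((u j * ((1/4) * iteratedFDeriv ℝ 2 m x (fun _ => u) * iteratedFDeriv ℝ 2 f x (fun _ => u) + (1/6) * iteratedFDeriv ℝ 3 m x (fun _ => u) * fderiv ℝ f x u + (1/24) * iteratedFDeriv ℝ 4 m x (fun _ => u) * f x)) * K u))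
        = (u j * (m (x + h • u) - m x - h * fderiv ℝ m x u) * f (x + h • u)
          - (h^2/2 * (u j * iteratedFDeriv ℝ 2 m x (fun _ => u) * f x)
           + h^3 * ((1/2) * (u j * iteratedFDeriv ℝ 2 m x (fun _ => u) * fderiv ℝ f x u)
                    + (1/6) * f x * (u j * iteratedFDeriv ℝ 3 m x (fun _ => u)))
           + h^4 * (u j * ((1/4) * iteratedFDeriv ℝ 2 m x (fun _ => u)
                      * iteratedFDeriv ℝ 2 f x (fun _ => u)
                    + (1/6) * iteratedFDeriv ℝ 3 m x (fun _ => u) * fderiv ℝ f x u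
                    + (1/24) * iteratedFDeriv ℝ 4 m x (fun _ => u) * f x)))) * K u := by ring
    rw [Real.norm_eq_abs, e, abs_mul, abs_of_nonneg (hK_nonneg u)]
    calc |u j * (m (x + h • u) - m x - h * fderiv ℝ m x u) * f (x + h • u)
          - (h^2/2 * (u j * iteratedFDeriv ℝ 2 m x (fun _ => u) * f x)
           + h^3 * ((1/2) * (u j * iteratedFDeriv ℝ 2 m x (fun _ => u) * fderiv ℝ f x u)
                    + (1/6) * f x * (u j * iteratedFDeriv ℝ 3 m x (fun _ => u)))
           + h^4 * (u j * ((1/4) * iteratedFDeriv ℝ 2 m x (fun _ => u)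
                      * iteratedFDeriv ℝ 2 f x (fun _ => u)
                    + (1/6) * iteratedFDeriv ℝ 3 m x (fun _ => u) * fderiv ℝ f x u
                    + (1/24) * iteratedFDeriv ℝ 4 m x (fun _ => u) * f x)))| * K u
        ≤ (h^5 * ((‖iteratedFDeriv ℝ 3 m x‖ * ‖iteratedFDeriv ℝ 2 f x‖ / 12
      + ‖iteratedFDeriv ℝ 4 m x‖ * ‖fderiv ℝ f x‖ / 24
      + ‖iteratedFDeriv ℝ 4 m x‖ * ‖iteratedFDeriv ℝ 2 f x‖ / 48
      + |F₃| * ‖iteratedFDeriv ℝ 2 m x‖ / 2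
      + |F₃| * ‖iteratedFDeriv ℝ 3 m x‖ / 6
      + |F₃| * ‖iteratedFDeriv ℝ 4 m x‖ / 24
      + |M₅| * |f x| + |M₅| * |F₁|) * (1 + (∑ i, u i ^ 2) ^ 4))) * K u :=
          mul_le_mul_of_nonneg_right (hrem u) (hK_nonneg u)
      _ = (h^5 * (‖iteratedFDeriv ℝ 3 m x‖ * ‖iteratedFDeriv ℝ 2 f x‖ / 12
      + ‖iteratedFDeriv ℝ 4 m x‖ * ‖fderiv ℝ f x‖ / 24
      + ‖iteratedFDeriv ℝ 4 m x‖ * ‖iteratedFDeriv ℝ 2 f x‖ / 48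
      + |F₃| * ‖iteratedFDeriv ℝ 2 m x‖ / 2
      + |F₃| * ‖iteratedFDeriv ℝ 3 m x‖ / 6
      + |F₃| * ‖iteratedFDeriv ℝ 4 m x‖ / 24
      + |M₅| * |f x| + |M₅| * |F₁|)) * ((1 + (∑ i, u i ^ 2) ^ 4) * K u) := by ring
  refine hR.trans ?_
  have h5nn : (0:ℝ) ≤ h^5 := (pow_pos hh0 5).le
  have hC0nn : (0:ℝ) ≤ (‖iteratedFDeriv ℝ 3 m x‖ * ‖iteratedFDeriv ℝ 2 f x‖ / 12
      + ‖iteratedFDeriv ℝ 4 m x‖ * ‖fderiv ℝ f x‖ / 24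
      + ‖iteratedFDeriv ℝ 4 m x‖ * ‖iteratedFDeriv ℝ 2 f x‖ / 48
      + |F₃| * ‖iteratedFDeriv ℝ 2 m x‖ / 2
      + |F₃| * ‖iteratedFDeriv ℝ 3 m x‖ / 6
      + |F₃| * ‖iteratedFDeriv ℝ 4 m x‖ / 24
      + |M₅| * |f x| + |M₅| * |F₁|) := by positivity
  calc (h^5 * (‖iteratedFDeriv ℝ 3 m x‖ * ‖iteratedFDeriv ℝ 2 f x‖ / 12
      + ‖iteratedFDeriv ℝ 4 m x‖ * ‖fderiv ℝ f x‖ / 24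
      + ‖iteratedFDeriv ℝ 4 m x‖ * ‖iteratedFDeriv ℝ 2 f x‖ / 48
      + |F₃| * ‖iteratedFDeriv ℝ 2 m x‖ / 2
      + |F₃| * ‖iteratedFDeriv ℝ 3 m x‖ / 6
      + |F₃| * ‖iteratedFDeriv ℝ 4 m x‖ / 24
      + |M₅| * |f x| + |M₅| * |F₁|)) * ∫ u : Fin p → ℝ, (1 + (∑ i, u i ^ 2) ^ 4) * K u
      = ((‖iteratedFDeriv ℝ 3 m x‖ * ‖iteratedFDeriv ℝ 2 f x‖ / 12
      + ‖iteratedFDeriv ℝ 4 m x‖ * ‖fderiv ℝ f x‖ / 24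
      + ‖iteratedFDeriv ℝ 4 m x‖ * ‖iteratedFDeriv ℝ 2 f x‖ / 48
      + |F₃| * ‖iteratedFDeriv ℝ 2 m x‖ / 2
      + |F₃| * ‖iteratedFDeriv ℝ 3 m x‖ / 6
      + |F₃| * ‖iteratedFDeriv ℝ 4 m x‖ / 24
      + |M₅| * |f x| + |M₅| * |F₁|) * ∫ u : Fin p → ℝ, (1 + (∑ i, u i ^ 2) ^ 4) * K u) * h^5 := by ring
    _ ≤ ((‖iteratedFDeriv ℝ 3 m x‖ * ‖iteratedFDeriv ℝ 2 f x‖ / 12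
      + ‖iteratedFDeriv ℝ 4 m x‖ * ‖fderiv ℝ f x‖ / 24
      + ‖iteratedFDeriv ℝ 4 m x‖ * ‖iteratedFDeriv ℝ 2 f x‖ / 48
      + |F₃| * ‖iteratedFDeriv ℝ 2 m x‖ / 2
      + |F₃| * ‖iteratedFDeriv ℝ 3 m x‖ / 6
      + |F₃| * ‖iteratedFDeriv ℝ 4 m x‖ / 24
      + |M₅| * |f x| + |M₅| * |F₁|) * (∫ u : Fin p → ℝ, (1 + (∑ i, u i ^ 2) ^ 4) * K u) + 1) * h^5 := by
        refine mul_le_mul_of_nonneg_right ?_ h5nn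
        linarith
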